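/- Let C ⊆ S_1 × A × S_2 be a constraint code and let C' ⊆ S_1 × A × S_2' be the trimmed-and-truncated version arising from trimming S_2 to a subspace Y ⊆ S_2: C' = {(s_1, a, s_2) ∈ C : s_2 ∈ Y}. Then under the pairing with sign inversion on the outgoing state, (C')^⊥ ⊆ S_1* × A* × Y* equals the image of C^⊥ under the map id × id × r, where r: S_2* → Y* is restriction of functionals; i.e., trimming a state space to Y dualizes to merging the dual state space to S_2*/Y^⊥ ≅ Y*. -/

import Mathlib

open Module

/-- The orthogonal complement of a constraint code `C ⊆ S1 × A × S2`, taken inside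
`S1* × A* × S2*` with respect to the pairing with sign inversion on the outgoing state:
`⟨(s,a,t),(σ,α,τ)⟩ = σ(s) + α(a) − τ(t)`. -/
def constraintPerp {F S1 A S2 : Type*} [Field F]
    [AddCommGroup S1] [Module F S1] [AddCommGroup A] [Module F A]
    [AddCommGroup S2] [Module F S2] (C : Submodule F (S1 × A × S2)) :
    Submodule F (Module.Dual F S1 × Module.Dual F A × Module.Dual F S2) where
  carrier := {d | ∀ x ∈ C, d.1 x.1 + d.2.1 x.2.1 - d.2.2 x.2.2 = 0}
  zero_mem' := by intro x hx; simp
  add_mem' := by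
    intro a b ha hb x hx
    have h1 := ha x hx
    have h2 := hb x hx
    simp only [Prod.fst_add, Prod.snd_add, LinearMap.add_apply]
    linear_combination h1 + h2
  smul_mem' := by
    intro r a ha x hx
    have h1 := ha x hx
    simp only [Prod.smul_fst, Prod.smul_snd, LinearMap.smul_apply, smul_eq_mul]
    linear_combination r * h1

/-- Trimming dualizes to merging: let `C ⊆ S1 × A × S2` be a constraint code and let
`C' ⊆ S1 × A × Y` be the result of trimming the state space `S2` to a subspace `Y`
(i.e. `C' = {(s1,a,s2) ∈ C : s2 ∈ Y}`, viewed inside `S1 × A × Y`). Then, under the pairing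
with sign inversion on the outgoing state, `(C')^⊥ ⊆ S1* × A* × Y*` equals the image of
`C^⊥` under `id × id × r`, where `r : S2* → Y*` is restriction of functionals (so that
trimming to `Y` dualizes to merging the dual state space to `S2*/Y^⊥ ≅ Y*`). -/
theorem trim_dualizes_to_merge
    {F S1 A S2 : Type*} [Field F]
    [AddCommGroup S1] [Module F S1] [AddCommGroup A] [Module F A]
    [AddCommGroup S2] [Module F S2] [FiniteDimensional F S1]
    [FiniteDimensional F A] [FiniteDimensional F S2]
    (C : Submodule F (S1 × A × S2)) (Y : Submodule F S2) :
    constraintPerp (Submodule.comap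
        ((LinearMap.id : S1 →ₗ[F] S1).prodMap
          ((LinearMap.id : A →ₗ[F] A).prodMap Y.subtype)) C) =
      Submodule.map
        ((LinearMap.id : Dual F S1 →ₗ[F] Dual F S1).prodMap
          ((LinearMap.id : Dual F A →ₗ[F] Dual F A).prodMap Y.subtype.dualMap))
        (constraintPerp C) := by
  ext d
  constructor
  · rintro hd
    obtain ⟨σ, α, φ⟩ := d
    -- hd : for all (s,a,y) with (s,a,↑y) ∈ C, σ s + α a - φ y = 0
    have hd' : ∀ s a (y : Y), (s, a, (y : S2)) ∈ C → σ s + α a - φ y = 0 := by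
      intro s a y h
      exact hd (s, a, y) (by simpa [Submodule.mem_comap] using h)
    -- Build a graph submodule D ⊆ S2 × F
    set L1 : (S1 × A × S2) →ₗ[F] S2 × F :=
      LinearMap.prod ((LinearMap.snd F A S2).comp (LinearMap.snd F S1 (A × S2)))
        ((σ.comp (LinearMap.fst F S1 (A × S2))) +
          (α.comp ((LinearMap.fst F A S2).comp (LinearMap.snd F S1 (A × S2))))) with hL1
    set L2 : Y →ₗ[F] S2 × F := Y.subtype.prod φ with hL2
    set D : Submodule F (S2 × F) := C.map L1 ⊔ LinearMap.range L2 with hDdef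
    have hg : ∀ x ∈ D, x.1 = 0 → x.2 = 0 := by
      rintro ⟨u, c⟩ hx h0
      rw [hDdef, Submodule.mem_sup] at hx
      obtain ⟨p, hp, q, hq, hpq⟩ := hx
      obtain ⟨⟨s, a, t⟩, hC, rfl⟩ := hp
      obtain ⟨y, rfl⟩ := hq
      simp only [hL1, hL2, LinearMap.prod_apply, Function.prod, LinearMap.comp_apply,
        LinearMap.snd_apply, LinearMap.fst_apply, LinearMap.add_apply,
        Submodule.coe_subtype, Prod.mk_add_mk, Prod.mk.injEq] at hpq h0 ⊢
      obtain ⟨h1, h2⟩ := hpq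
      rw [h0] at h1
      have ht : t = -(y : S2) := eq_neg_of_add_eq_zero_left h1
      have htY : t ∈ Y := ht ▸ Y.neg_mem y.2
      have := hd' s a ⟨t, htY⟩ hC
      have hφ : φ ⟨t, htY⟩ = -φ y := by
        have : (⟨t, htY⟩ : Y) = -y := by ext; simp [ht]
        rw [this, map_neg]
      rw [← h2]
      linear_combination (hd' s a ⟨t, htY⟩ hC) + hφ
    have hgraph := D.toLinearPMap_graph_eq hg
    obtain ⟨τ, hτ⟩ := LinearMap.exists_extend D.toLinearPMap.toFun
    have key : ∀ u c, (u, c) ∈ D → τ u = c := by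
      intro u c huc
      rw [← hgraph, LinearPMap.mem_graph_iff] at huc
      obtain ⟨x', hx1, hx2⟩ := huc
      have hx1' : (x' : S2) = u := hx1
      have : τ u = D.toLinearPMap.toFun x' := by
        rw [← hx1', ← hτ]; rfl
      rw [this]; exact hx2
    refine ⟨(σ, α, τ), ?_, ?_⟩
    · intro x hx
      obtain ⟨s, a, t⟩ := x
      have hmem : ((t, σ s + α a) : S2 × F) ∈ D := by
        apply Submodule.mem_sup_left
        exact ⟨(s, a, t), hx, by simp [hL1]⟩
      have := key t (σ s + α a) hmem
      simp only [this]
      ring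
    · have hrestr : ∀ y : Y, τ (y : S2) = φ y := by
        intro y
        exact key (y : S2) (φ y) (Submodule.mem_sup_right ⟨y, by simp [hL2]⟩)
      simp only [LinearMap.prodMap_apply, LinearMap.id_apply, Prod.mk.injEq]
      refine ⟨trivial, trivial, ?_⟩
      ext y
      simp [LinearMap.dualMap_apply, hrestr y]
  · rintro ⟨⟨σ, α, τ⟩, hmem, rfl⟩
    rintro ⟨s, a, y⟩ hx
    have := hmem (s, a, (y : S2)) (by simpa [Submodule.mem_comap] using hx)
    simpa using this
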